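/- Let n ≥ 1 and let Φ ⊆ BC_n be a root subsystem. Define P(Φ) := {β ∈ B_n : there exists a nonzero real t with t·β ∈ Φ}, where B_n = {±e_i ± e_j : i ≠ j} ∪ {±e_i : 1 ≤ i ≤ n}. Then P(Φ) is a root subsystem of BC_n, and the sets of root hyperplanes coincide: {ker⟨α,·⟩ : α ∈ Φ} = {ker⟨β,·⟩ : β ∈ P(Φ)} as sets of linear subspaces of ℝ^n. -/

import Mathlib

open Finset

noncomputable section

/-- Standard basis vector `e i` of `ℝ^n`. -/
def E {n : ℕ} (i : Fin n) : Fin n → ℝ := Pi.single i 1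

/-- Standard inner product on `ℝ^n`. -/
def dot {n : ℕ} (v w : Fin n → ℝ) : ℝ := ∑ i, v i * w i

/-- Reflection across the hyperplane orthogonal to `α`. -/
def reflRoot {n : ℕ} (α v : Fin n → ℝ) : Fin n → ℝ := v - (2 * dot v α / dot α α) • α

/-- The root system `A_{n-1}`. -/
def Aset (n : ℕ) : Set (Fin n → ℝ) := {α | ∃ i j : Fin n, i ≠ j ∧ α = E i - E j}

/-- The root system `D_n`. -/
def Dset (n : ℕ) : Set (Fin n → ℝ) :=
  {α | ∃ i j : Fin n, i ≠ j ∧ (α = E i - E j ∨ α = E i + E j ∨ α = -(E i + E j))}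

/-- The root system `B_n`. -/
def Bset (n : ℕ) : Set (Fin n → ℝ) := Dset n ∪ {α | ∃ i : Fin n, α = E i ∨ α = -E i}

/-- The root system `C_n`. -/
def Cset (n : ℕ) : Set (Fin n → ℝ) :=
  Dset n ∪ {α | ∃ i : Fin n, α = (2:ℝ) • E i ∨ α = -((2:ℝ) • E i)}

/-- The nonreduced root system `BC_n`. -/
def BCset (n : ℕ) : Set (Fin n → ℝ) := Bset n ∪ Cset n

/-! ### Auxiliary lemmas -/

lemma E_apply {n : ℕ} (i m : Fin n) : E i m = if m = i then 1 else 0 := by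
  simp [E, Pi.single_apply]

lemma dot_comm {n : ℕ} (v w : Fin n → ℝ) : dot v w = dot w v := by
  simp [dot, mul_comm]

lemma dot_sub_left {n : ℕ} (u v w : Fin n → ℝ) : dot (u - v) w = dot u w - dot v w := by
  simp [dot, sub_mul, Finset.sum_sub_distrib]

lemma dot_add_left {n : ℕ} (u v w : Fin n → ℝ) : dot (u + v) w = dot u w + dot v w := by
  simp [dot, add_mul, Finset.sum_add_distrib]

lemma dot_neg_left {n : ℕ} (u w : Fin n → ℝ) : dot (-u) w = - dot u w := by
  simp [dot, neg_mul]

lemma dot_smul_left {n : ℕ} (c : ℝ) (u w : Fin n → ℝ) : dot (c • u) w = c * dot u w := by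
  simp [dot, Finset.mul_sum, mul_assoc]

lemma dot_sub_right {n : ℕ} (u v w : Fin n → ℝ) : dot w (u - v) = dot w u - dot w v := by
  rw [dot_comm, dot_sub_left, dot_comm u w, dot_comm v w]

lemma dot_add_right {n : ℕ} (u v w : Fin n → ℝ) : dot w (u + v) = dot w u + dot w v := by
  rw [dot_comm, dot_add_left, dot_comm u w, dot_comm v w]

lemma dot_neg_right {n : ℕ} (u w : Fin n → ℝ) : dot w (-u) = - dot w u := by
  rw [dot_comm, dot_neg_left, dot_comm]

lemma dot_smul_right {n : ℕ} (c : ℝ) (u w : Fin n → ℝ) : dot w (c • u) = c * dot w u := by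
  rw [dot_comm, dot_smul_left, dot_comm]

lemma dot_E {n : ℕ} (i j : Fin n) : dot (E i) (E j) = if i = j then 1 else 0 := by
  classical
  rw [dot, Finset.sum_eq_single i]
  · simp [E_apply, eq_comm]
  · intro b _ hb; simp [E_apply, hb]
  · simp

lemma dot_refl_self {n : ℕ} (α β : Fin n → ℝ) (h : dot α α ≠ 0) :
    dot (reflRoot α β) (reflRoot α β) = dot β β := by
  simp only [reflRoot, dot_sub_left, dot_sub_right, dot_smul_left, dot_smul_right]
  rw [dot_comm α β]
  field_simp
  ring

lemma reflRoot_smul {n : ℕ} (α β : Fin n → ℝ) (t s : ℝ) (ht : t ≠ 0) (hA : dot α α ≠ 0) :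
    reflRoot (t • α) (s • β) = s • reflRoot α β := by
  simp only [reflRoot, dot_smul_left, dot_smul_right, smul_smul, smul_sub]
  congr 1
  congr 1
  field_simp

lemma ker_smul {n : ℕ} {c : ℝ} (hc : c ≠ 0) (β : Fin n → ℝ) :
    {v : Fin n → ℝ | dot (c • β) v = 0} = {v | dot β v = 0} := by
  ext v
  simp [dot_smul_left, hc]

/-- Vectors with integer coordinates. -/
def IntVec {n : ℕ} (v : Fin n → ℝ) : Prop := ∀ i, ∃ k : ℤ, v i = (k : ℝ)

lemma dot_int {n : ℕ} {v w : Fin n → ℝ} (hv : IntVec v) (hw : IntVec w) :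
    ∃ k : ℤ, dot v w = (k : ℝ) := by
  choose f hf using hv
  choose g hg using hw
  refine ⟨∑ i, f i * g i, ?_⟩
  push_cast
  simp [dot, hf, hg]

lemma intVec_E {n : ℕ} (i : Fin n) : IntVec (E i) := by
  intro m
  by_cases h : m = i
  · exact ⟨1, by simp [E_apply, h]⟩
  · exact ⟨0, by simp [E_apply, h]⟩

lemma IntVec.sub {n : ℕ} {v w : Fin n → ℝ} (hv : IntVec v) (hw : IntVec w) :
    IntVec (v - w) := by
  intro m
  obtain ⟨k, hk⟩ := hv m; obtain ⟨l, hl⟩ := hw m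
  exact ⟨k - l, by push_cast; simp [hk, hl]⟩

lemma IntVec.add {n : ℕ} {v w : Fin n → ℝ} (hv : IntVec v) (hw : IntVec w) :
    IntVec (v + w) := by
  intro m
  obtain ⟨k, hk⟩ := hv m; obtain ⟨l, hl⟩ := hw m
  exact ⟨k + l, by push_cast; simp [hk, hl]⟩

lemma IntVec.neg {n : ℕ} {v : Fin n → ℝ} (hv : IntVec v) : IntVec (-v) := by
  intro m
  obtain ⟨k, hk⟩ := hv m
  exact ⟨-k, by push_cast; simp [hk]⟩

/-- `B_n` is exactly the set of integer vectors of squared norm `1` or `2`. -/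
lemma mem_Bset_iff {n : ℕ} (v : Fin n → ℝ) :
    v ∈ Bset n ↔ IntVec v ∧ (dot v v = 1 ∨ dot v v = 2) := by
  classical
  constructor
  · rintro (⟨i, j, hij, h | h | h⟩ | ⟨i, h | h⟩) <;> subst h
    · refine ⟨(intVec_E i).sub (intVec_E j), Or.inr ?_⟩
      simp [dot_sub_left, dot_sub_right, dot_E, hij, hij.symm]; norm_num
    · refine ⟨(intVec_E i).add (intVec_E j), Or.inr ?_⟩
      simp [dot_add_left, dot_add_right, dot_E, hij, hij.symm]; norm_num
    · refine ⟨((intVec_E i).add (intVec_E j)).neg, Or.inr ?_⟩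
      simp [dot_neg_left, dot_neg_right, dot_add_left, dot_add_right, dot_E, hij, hij.symm]
      norm_num
    · exact ⟨intVec_E i, Or.inl (by simp [dot_E])⟩
    · exact ⟨(intVec_E i).neg, Or.inl (by simp [dot_neg_left, dot_neg_right, dot_E])⟩
  · rintro ⟨hint, hnorm⟩
    choose f hf using hint
    have hdot : dot v v = ((∑ i, f i * f i : ℤ) : ℝ) := by push_cast; simp [dot, hf]
    have hsum : (∑ i, f i * f i) = 1 ∨ (∑ i, f i * f i) = 2 := by
      rcases hnorm with h | h <;> [left; right] <;> exact_mod_cast hdot ▸ h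
    have hterm : ∀ i, f i * f i ≤ 2 := by
      intro i
      have h1 : f i * f i ≤ ∑ j, f j * f j :=
        Finset.single_le_sum (fun j _ => mul_self_nonneg (f j)) (Finset.mem_univ i)
      rcases hsum with h | h <;> linarith
    have hpm : ∀ i, f i = -1 ∨ f i = 0 ∨ f i = 1 := by
      intro i
      have h2 : 2 * f i ≤ 3 := by nlinarith [hterm i, sq_nonneg (f i - 1)]
      have h3 : -3 ≤ 2 * f i := by nlinarith [hterm i, sq_nonneg (f i + 1)]
      omega
    have hsq : ∀ i, f i ≠ 0 → f i * f i = 1 := by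
      intro i hi
      rcases hpm i with h | h | h <;> simp [h] at hi ⊢
    have hcard : (∑ i, f i * f i)
        = ((Finset.univ.filter (fun i => f i ≠ 0)).card : ℤ) := by
      rw [← Finset.sum_filter_add_sum_filter_not Finset.univ (fun i => f i ≠ 0)]
      have h2 : ∑ i ∈ Finset.univ.filter (fun i => ¬ f i ≠ 0), f i * f i = 0 :=
        Finset.sum_eq_zero (by intro x hx; simp at hx; simp [hx])
      have h1 : ∑ i ∈ Finset.univ.filter (fun i => f i ≠ 0), f i * f i
          = ((Finset.univ.filter (fun i => f i ≠ 0)).card : ℤ) := by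
        rw [Finset.sum_congr rfl (fun i hi => hsq i (by simpa using hi))]
        simp
      rw [h1, h2, add_zero]
    rcases hsum with h | h
    · -- squared norm 1 : short root
      have hc1 : (Finset.univ.filter (fun i => f i ≠ 0)).card = 1 := by
        rw [hcard] at h; exact_mod_cast h
      obtain ⟨i, hi⟩ := Finset.card_eq_one.mp hc1
      have hfi : f i ≠ 0 := by
        have : i ∈ Finset.univ.filter (fun i => f i ≠ 0) := hi ▸ Finset.mem_singleton_self i
        simpa using this
      have hrest : ∀ m, m ≠ i → f m = 0 := by
        intro m hm
        by_contra hm0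
        have : m ∈ Finset.univ.filter (fun i => f i ≠ 0) := by simpa using hm0
        rw [hi, Finset.mem_singleton] at this
        exact hm this
      right
      refine ⟨i, ?_⟩
      rcases hpm i with hv1 | hv1 | hv1
      · right; funext m
        by_cases hm : m = i
        · subst hm; rw [hf m, hv1]; norm_num [E_apply]
        · rw [hf m, hrest m hm]; norm_num [E_apply, hm]
      · exact absurd hv1 hfi
      · left; funext m
        by_cases hm : m = i
        · subst hm; rw [hf m, hv1]; norm_num [E_apply]
        · rw [hf m, hrest m hm]; norm_num [E_apply, hm]
    · -- squared norm 2 : long root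
      have hc2 : (Finset.univ.filter (fun i => f i ≠ 0)).card = 2 := by
        rw [hcard] at h; exact_mod_cast h
      obtain ⟨i, j, hij, hijS⟩ := Finset.card_eq_two.mp hc2
      have hfi : f i ≠ 0 := by
        have : i ∈ Finset.univ.filter (fun i => f i ≠ 0) := by rw [hijS]; simp
        simpa using this
      have hfj : f j ≠ 0 := by
        have : j ∈ Finset.univ.filter (fun i => f i ≠ 0) := by rw [hijS]; simp
        simpa using this
      have hrest : ∀ m, m ≠ i → m ≠ j → f m = 0 := by
        intro m hm1 hm2
        by_contra hm0
        have : m ∈ Finset.univ.filter (fun i => f i ≠ 0) := by simpa using hm0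
        rw [hijS, Finset.mem_insert, Finset.mem_singleton] at this
        tauto
      left
      rcases hpm i with h1 | h1 | h1 <;> rcases hpm j with h2 | h2 | h2
      · -- (-1,-1) : -(E i + E j)
        refine ⟨i, j, hij, Or.inr (Or.inr ?_)⟩
        funext m
        by_cases hm1 : m = i
        · subst hm1; rw [hf m, h1]; norm_num [E_apply, hij]
        · by_cases hm2 : m = j
          · subst hm2; rw [hf m, h2]; norm_num [E_apply, Ne.symm hij]
          · rw [hf m, hrest m hm1 hm2]; norm_num [E_apply, hm1, hm2]
      · exact absurd h2 hfj
      · -- (-1,1) : E j - E i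
        refine ⟨j, i, hij.symm, Or.inl ?_⟩
        funext m
        by_cases hm1 : m = i
        · subst hm1; rw [hf m, h1]; norm_num [E_apply, hij]
        · by_cases hm2 : m = j
          · subst hm2; rw [hf m, h2]; norm_num [E_apply, Ne.symm hij]
          · rw [hf m, hrest m hm1 hm2]; norm_num [E_apply, hm1, hm2]
      · exact absurd h1 hfi
      · exact absurd h1 hfi
      · exact absurd h1 hfi
      · -- (1,-1) : E i - E j
        refine ⟨i, j, hij, Or.inl ?_⟩
        funext m
        by_cases hm1 : m = i
        · subst hm1; rw [hf m, h1]; norm_num [E_apply, hij]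
        · by_cases hm2 : m = j
          · subst hm2; rw [hf m, h2]; norm_num [E_apply, Ne.symm hij]
          · rw [hf m, hrest m hm1 hm2]; norm_num [E_apply, hm1, hm2]
      · exact absurd h2 hfj
      · -- (1,1) : E i + E j
        refine ⟨i, j, hij, Or.inr (Or.inl ?_)⟩
        funext m
        by_cases hm1 : m = i
        · subst hm1; rw [hf m, h1]; norm_num [E_apply, hij]
        · by_cases hm2 : m = j
          · subst hm2; rw [hf m, h2]; norm_num [E_apply, Ne.symm hij]
          · rw [hf m, hrest m hm1 hm2]; norm_num [E_apply, hm1, hm2]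

/-- `B_n` is closed under its own reflections. -/
lemma Bset_refl {n : ℕ} {α β : Fin n → ℝ} (ha : α ∈ Bset n) (hb : β ∈ Bset n) :
    reflRoot α β ∈ Bset n := by
  obtain ⟨haI, haN⟩ := (mem_Bset_iff α).mp ha
  obtain ⟨hbI, hbN⟩ := (mem_Bset_iff β).mp hb
  have hA : dot α α ≠ 0 := by rcases haN with h | h <;> rw [h] <;> norm_num
  obtain ⟨d, hd⟩ := dot_int hbI haI
  have hcInt : ∃ c : ℤ, 2 * dot β α / dot α α = (c : ℝ) := by
    rcases haN with h | h
    · exact ⟨2 * d, by rw [h, hd]; push_cast; ring⟩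
    · exact ⟨d, by rw [h, hd]; push_cast; ring⟩
  obtain ⟨c, hc⟩ := hcInt
  refine (mem_Bset_iff _).mpr ⟨?_, ?_⟩
  · intro m
    obtain ⟨k, hk⟩ := hbI m
    obtain ⟨l, hl⟩ := haI m
    refine ⟨k - c * l, ?_⟩
    have : reflRoot α β m = β m - (2 * dot β α / dot α α) * α m := by
      simp [reflRoot]
    rw [this, hk, hl, hc]
    push_cast
    ring
  · rw [dot_refl_self α β hA]
    exact hbN

/-- Decomposition of `BC_n` into short-lift-able pieces. -/
lemma BCset_cases {n : ℕ} {α : Fin n → ℝ} (h : α ∈ BCset n) :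
    α ∈ Bset n ∨ ∃ i : Fin n, α = (2:ℝ) • E i ∨ α = -((2:ℝ) • E i) := by
  rcases h with h | h
  · exact Or.inl h
  rcases h with h | h
  · exact Or.inl (Or.inl h)
  · exact Or.inr h

/-- The 'short lift' `P(Φ)` of a root subsystem `Φ ⊆ BC_n` is again a root subsystem,
with the same set of root hyperplanes. -/
theorem stmt17 (n : ℕ) (hn : 1 ≤ n) (Φ : Set (Fin n → ℝ)) (hsub : Φ ⊆ BCset n)
    (hcl : ∀ α ∈ Φ, ∀ β ∈ Φ, reflRoot α β ∈ Φ)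
    (PΦ : Set (Fin n → ℝ))
    (hP : PΦ = {β | β ∈ Bset n ∧ ∃ t : ℝ, t ≠ 0 ∧ t • β ∈ Φ}) :
    PΦ ⊆ BCset n ∧
    (∀ α ∈ PΦ, ∀ β ∈ PΦ, reflRoot α β ∈ PΦ) ∧
    {H : Set (Fin n → ℝ) | ∃ α ∈ Φ, H = {v | dot α v = 0}} =
      {H : Set (Fin n → ℝ) | ∃ β ∈ PΦ, H = {v | dot β v = 0}} := by
  refine ⟨?_, ?_, ?_⟩
  · intro β hβ
    rw [hP] at hβ
    exact Or.inl hβ.1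
  · intro α hα β hβ
    rw [hP] at hα hβ ⊢
    obtain ⟨haB, t, ht, htΦ⟩ := hα
    obtain ⟨hbB, s, hs, hsΦ⟩ := hβ
    have hA : dot α α ≠ 0 := by
      rcases ((mem_Bset_iff α).mp haB).2 with h | h <;> rw [h] <;> norm_num
    refine ⟨Bset_refl haB hbB, s, hs, ?_⟩
    have hmem := hcl _ htΦ _ hsΦ
    rwa [reflRoot_smul α β t s ht hA] at hmem
  · ext H
    simp only [Set.mem_setOf_eq]
    constructor
    · rintro ⟨α, hαΦ, rfl⟩
      rcases BCset_cases (hsub hαΦ) with hB | ⟨i, hi | hi⟩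
      · exact ⟨α, by rw [hP]; exact ⟨hB, 1, one_ne_zero, by rw [one_smul]; exact hαΦ⟩, rfl⟩
      · refine ⟨E i, ?_, ?_⟩
        · rw [hP]
          exact ⟨Or.inr ⟨i, Or.inl rfl⟩, 2, two_ne_zero, by rw [← hi]; exact hαΦ⟩
        · rw [hi]
          exact (ker_smul two_ne_zero (E i)).symm ▸ rfl
      · refine ⟨-E i, ?_, ?_⟩
        · rw [hP]
          refine ⟨Or.inr ⟨i, Or.inr rfl⟩, 2, two_ne_zero, ?_⟩
          rw [smul_neg, ← hi]
          exact hαΦ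
        · rw [hi, ← smul_neg]
          exact (ker_smul two_ne_zero (-E i))
    · rintro ⟨β, hβP, rfl⟩
      rw [hP] at hβP
      obtain ⟨hB, t, ht, htΦ⟩ := hβP
      exact ⟨t • β, htΦ, (ker_smul ht β).symm⟩
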